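/- Let γ > 0 and let p̂ be the add-γ estimator, p̂(i) = (n_{i,n} + γ)/(n + Kγ). If n > (4/3)·log(1/δ) with δ ∈ (0,1), then there exists p* ∈ Δ^K such that, with probability strictly greater than δ over n i.i.d. samples from p*, KL(p*‖p̂) ≥ (2·ln(1/δ))/(3n) · ( ln( 2·ln(1/δ)·(n + γK) / (3nγ) ) − 1 ) + γ/(n + γK). -/

import Mathlib

open scoped ENNReal
open MeasureTheory

/-- The probability simplex on `Fin K`. -/
def simplex (K : ℕ) : Set (Fin K → ℝ) :=
  {p | (∀ i, 0 ≤ p i) ∧ ∑ i, p i = 1}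

/-- Kullback–Leibler divergence between two vectors on `Fin K`, with the
conventions `0 · log 0 = 0` and value `∞` if `p i > 0 = q i` for some `i`. -/
noncomputable def klD {K : ℕ} (p q : Fin K → ℝ) : ℝ≥0∞ :=
  if ∀ i, 0 < p i → 0 < q i then ENNReal.ofReal (∑ i, p i * Real.log (p i / q i)) else ⊤

/-- The law of `n` i.i.d. samples from the distribution `p` on `Fin K`. -/
noncomputable def iidMeasure (n K : ℕ) (p : Fin K → ℝ) : Measure (Fin n → Fin K) :=
  ∑ x : Fin n → Fin K, (∏ t, ENNReal.ofReal (p (x t))) • Measure.dirac x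

/-- `countTo x t i` is the number of indices `s` among the first `t` samples with `x s = i`. -/
def countTo {n K : ℕ} (x : Fin n → Fin K) (t : ℕ) (i : Fin K) : ℕ :=
  (Finset.univ.filter (fun s : Fin n => (s : ℕ) < t ∧ x s = i)).card

lemma iid_single_le {n K : ℕ} (p : Fin K → ℝ) (S : Set (Fin n → Fin K))
    (x₀ : Fin n → Fin K) (hx : x₀ ∈ S) :
    (∏ t, ENNReal.ofReal (p (x₀ t))) ≤ iidMeasure n K p S := by
  have hSm : MeasurableSet S := (Set.to_countable S).measurableSet
  rw [iidMeasure, Measure.coe_finset_sum, Finset.sum_apply]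
  have hterm : (∏ t, ENNReal.ofReal (p (x₀ t))) =
      ((∏ t, ENNReal.ofReal (p (x₀ t))) • Measure.dirac x₀) S := by
    rw [Measure.smul_apply, Measure.dirac_apply' _ hSm, Set.indicator_of_mem hx]
    simp
  rw [hterm]
  exact Finset.single_le_sum
    (f := fun x : Fin n → Fin K => ((∏ t, ENNReal.ofReal (p (x t))) • Measure.dirac x) S)
    (fun _ _ => zero_le) (Finset.mem_univ x₀)

lemma neg_log_one_sub_lt {ε : ℝ} (h0 : 0 < ε) (h2 : ε < 1/2) :
    -Real.log (1 - ε) < 3/2 * ε := by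
  have h1 : (0:ℝ) < 1 - ε := by linarith
  have hq : 1 + 3/2*ε + (3/2*ε)^2/2 ≤ Real.exp (3/2*ε) :=
    Real.quadratic_le_exp_of_nonneg (by positivity)
  have hlt : (1 - ε)⁻¹ < Real.exp (3/2*ε) := by
    refine (inv_lt_iff_one_lt_mul₀ h1).mpr ?_
    nlinarith [hq, sq_nonneg ε]
  have := Real.log_lt_log (by positivity) hlt
  rwa [Real.log_inv, Real.log_exp] at this

lemma countTo_const {n K : ℕ} (c i : Fin K) :
    countTo (fun _ : Fin n => c) n i = if i = c then n else 0 := by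
  unfold countTo
  by_cases h : i = c
  · subst h
    rw [if_pos rfl]
    have he : (Finset.univ.filter fun s : Fin n => (s:ℕ) < n ∧ (fun _ : Fin n => i) s = i)
        = Finset.univ := by
      ext s; simp [s.is_lt]
    rw [he, Finset.card_univ, Fintype.card_fin]
  · rw [if_neg h]
    have he : (Finset.univ.filter fun s : Fin n => (s:ℕ) < n ∧ (fun _ : Fin n => c) s = i)
        = ∅ := by
      ext s; simp [Ne.symm h]
    rw [he, Finset.card_empty]

set_option maxHeartbeats 1000000 in
/-- lower bound for the add-γ estimator. -/
theorem add_gamma_lower_bound (K n : ℕ) (hK : 2 ≤ K)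
    (γ : ℝ) (hγ : 0 < γ)
    (δ : ℝ) (hδ : δ ∈ Set.Ioo (0 : ℝ) 1)
    (hn : (4/3 : ℝ) * Real.log (1/δ) < (n : ℝ)) :
    ∃ pstar ∈ simplex K,
      ENNReal.ofReal δ <
        iidMeasure n K pstar
          {x |
            ENNReal.ofReal
              (2 * Real.log (1/δ) / (3 * n) *
                  (Real.log (2 * Real.log (1/δ) * ((n : ℝ) + γ * K) / (3 * n * γ)) - 1) +
                γ / ((n : ℝ) + γ * K)) ≤
            klD pstar (fun i => ((countTo x n i : ℝ) + γ) / ((n : ℝ) + (K : ℝ) * γ))} := by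
  obtain ⟨hδ0, hδ1⟩ := hδ
  set L := Real.log (1/δ) with hLdef
  have hL0 : 0 < L := Real.log_pos (by rw [lt_div_iff₀ hδ0]; linarith)
  have hn0 : (0:ℝ) < n := lt_trans (by positivity) hn
  set ε := 2 * L / (3 * (n:ℝ)) with hεdef
  have hε0 : 0 < ε := by positivity
  have hε2 : ε < 1/2 := by rw [hεdef, div_lt_iff₀ (by positivity)]; nlinarith
  have hε1 : (0:ℝ) < 1 - ε := by linarith
  have h0K : 0 < K := by omega
  have h1K : 1 < K := by omega
  set i0 : Fin K := ⟨0, h0K⟩ with hi0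
  set i1 : Fin K := ⟨1, h1K⟩ with hi1
  have hne : i0 ≠ i1 := by simp [hi0, hi1, Fin.ext_iff]
  set pstar : Fin K → ℝ :=
    fun i => (if i = i0 then 1 - ε else 0) + (if i = i1 then ε else 0) with hpdef
  have hp0 : pstar i0 = 1 - ε := by simp [hpdef, hne]
  have hp1 : pstar i1 = ε := by simp [hpdef, hne.symm]
  have hpmem : pstar ∈ simplex K := by
    constructor
    · intro i
      simp only [hpdef]
      split <;> split <;> nlinarith
    · simp only [hpdef, Finset.sum_add_distrib, Finset.sum_ite_eq', Finset.mem_univ, if_true]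
      ring
  refine ⟨pstar, hpmem, ?_⟩
  set M : ℝ := (n:ℝ) + (K:ℝ) * γ with hM
  have hM0 : 0 < M := by positivity
  have hx₀S : (fun _ : Fin n => i0) ∈ {x : Fin n → Fin K |
      ENNReal.ofReal
        (ε * (Real.log (2 * L * ((n : ℝ) + γ * K) / (3 * ↑n * γ)) - 1) +
          γ / ((n : ℝ) + γ * K)) ≤
      klD pstar (fun i => ((countTo x n i : ℝ) + γ) / ((n : ℝ) + (K : ℝ) * γ))} := by
    have hq : ∀ i : Fin K,
        (0:ℝ) < ((countTo (fun _ : Fin n => i0) n i : ℝ) + γ) / ((n:ℝ) + (K:ℝ) * γ) := by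
      intro i
      have h1 : (0:ℝ) ≤ (countTo (fun _ : Fin n => i0) n i : ℝ) := Nat.cast_nonneg _
      positivity
    simp only [Set.mem_setOf_eq, klD, if_pos (fun i _ => hq i)]
    apply ENNReal.ofReal_le_ofReal
    have hsum : ∑ i, pstar i *
        Real.log (pstar i / (((countTo (fun _ : Fin n => i0) n i : ℝ) + γ) / ((n:ℝ) + (K:ℝ) * γ))) =
        (1 - ε) * Real.log ((1 - ε) / (((n:ℝ) + γ) / M)) +
        ε * Real.log (ε / (γ / M)) := by
      have hpt : ∀ i : Fin K,
          pstar i * Real.log (pstar i /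
            (((countTo (fun _ : Fin n => i0) n i : ℝ) + γ) / ((n:ℝ) + (K:ℝ) * γ))) =
          (if i = i0 then (1 - ε) * Real.log ((1 - ε) / (((n:ℝ) + γ) / M)) else 0) +
          (if i = i1 then ε * Real.log (ε / (γ / M)) else 0) := by
        intro i
        by_cases h : i = i0
        · subst h
          rw [countTo_const, if_pos rfl, if_pos rfl, if_neg hne, hp0, hM]
          norm_num
        · by_cases h1 : i = i1
          · subst h1
            rw [countTo_const, if_neg (fun hh => hne hh.symm), if_neg h, if_pos rfl, hp1, hM]
            norm_num
          · have hz : pstar i = 0 := by simp [hpdef, h, h1]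
            rw [hz, if_neg h, if_neg h1]
            simp
      rw [Finset.sum_congr rfl (fun i _ => hpt i), Finset.sum_add_distrib,
        Finset.sum_ite_eq', Finset.sum_ite_eq']
      simp
    rw [hsum]
    have harg : 2 * L * ((n : ℝ) + γ * K) / (3 * (n:ℝ) * γ) = ε / (γ / M) := by
      rw [hεdef, hM]
      field_simp
    rw [harg]
    have hqA : (0:ℝ) < ((n:ℝ) + γ) / M := by positivity
    have hlog : Real.log ((((n:ℝ) + γ) / M) / (1 - ε)) ≤ (((n:ℝ) + γ) / M) / (1 - ε) - 1 :=
      Real.log_le_sub_one_of_pos (by positivity)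
    have hswap : Real.log ((1 - ε) / (((n:ℝ) + γ) / M)) =
        - Real.log ((((n:ℝ) + γ) / M) / (1 - ε)) := by
      rw [← Real.log_inv, inv_div]
    have hmul := mul_le_mul_of_nonneg_left hlog (le_of_lt hε1)
    have hh : (1 - ε) * ((((n:ℝ) + γ) / M) / (1 - ε)) = ((n:ℝ) + γ) / M := by
      field_simp
    have hlb : (1 - ε) - ((n:ℝ) + γ) / M ≤
        (1 - ε) * Real.log ((1 - ε) / (((n:ℝ) + γ) / M)) := by
      rw [hswap]; nlinarith [hmul, hh]
    have h2 : (1:ℝ) - ((n:ℝ) + γ) / M = γ * ((K:ℝ) - 1) / M := by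
      rw [hM]; field_simp; ring
    have hK1 : (2:ℝ) ≤ (K:ℝ) := by exact_mod_cast hK
    have h3 : γ / M ≤ γ * ((K:ℝ) - 1) / M := by
      gcongr
      nlinarith
    have h4 : γ / ((n:ℝ) + γ * K) = γ / M := by rw [hM]; ring_nf
    rw [h4]
    nlinarith [hlb, h2, h3]
  have hle := iid_single_le pstar _ _ hx₀S
  have hprod : (∏ t : Fin n, ENNReal.ofReal (pstar ((fun _ : Fin n => i0) t))) =
      ENNReal.ofReal ((1 - ε)^n) := by
    rw [Finset.prod_congr rfl (fun t _ => by rw [hp0]), Finset.prod_const, Finset.card_univ,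
      Fintype.card_fin, ← ENNReal.ofReal_pow (le_of_lt hε1)]
  rw [hprod] at hle
  have hδlt : δ < (1 - ε)^n := by
    have hlogb : -Real.log (1 - ε) < 3/2 * ε := neg_log_one_sub_lt hε0 hε2
    have hLn : (n:ℝ) * (3/2 * ε) = L := by
      rw [hεdef]; field_simp
    have h1 : Real.log δ < (n:ℝ) * Real.log (1 - ε) := by
      have hLδ : L = -Real.log δ := by rw [hLdef, one_div, Real.log_inv]
      nlinarith [hlogb, hLn, hn0]
    calc δ = Real.exp (Real.log δ) := (Real.exp_log hδ0).symm
      _ < Real.exp ((n:ℝ) * Real.log (1 - ε)) := Real.exp_lt_exp.mpr h1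
      _ = (1 - ε)^n := by
          rw [← Real.log_pow, Real.exp_log (by positivity)]
  exact lt_of_lt_of_le ((ENNReal.ofReal_lt_ofReal_iff (by positivity)).mpr hδlt) hle
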